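/- (Maximum stabilizer dimension) For every nonzero n-qubit state vector ψ, 2 · dim_ℝ K_ψ ≤ 3n, i.e. dim_ℝ K_ψ ≤ 3n/2. -/

import Mathlib

open scoped Matrix
open Module

noncomputable section

/-- The `n`-qubit Hilbert space `(ℂ²)^{⊗n}`, realized as functions `(Fin n → Fin 2) → ℂ`. -/
abbrev QState (n : ℕ) := (Fin n → Fin 2) → ℂ

/-- The ambient real vector space `ℝ × (Fin n → M₂(ℂ))` containing `u(1) ⊕ su(2)^n`. -/
abbrev GV (n : ℕ) := ℝ × (Fin n → Matrix (Fin 2) (Fin 2) ℂ)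

/-- `su(2)`: traceless skew-Hermitian `2 × 2` complex matrices, as a real subspace. -/
def su2 : Submodule ℝ (Matrix (Fin 2) (Fin 2) ℂ) where
  carrier := {X | Xᴴ = -X ∧ X.trace = 0}
  add_mem' := by
    rintro X Y ⟨hX1, hX2⟩ ⟨hY1, hY2⟩
    exact ⟨by rw [Matrix.conjTranspose_add, hX1, hY1, neg_add],
           by rw [Matrix.trace_add, hX2, hY2, add_zero]⟩
  zero_mem' := ⟨by simp, by simp⟩
  smul_mem' := by
    rintro r X ⟨hX1, hX2⟩
    exact ⟨by rw [Matrix.conjTranspose_smul, hX1, star_trivial, smul_neg],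
           by rw [Matrix.trace_smul, hX2, smul_zero]⟩

/-- The Lie algebra `g = u(1) ⊕ su(2)^n` as a real subspace of `GV n`. -/
def gSub (n : ℕ) : Submodule ℝ (GV n) :=
  (⊤ : Submodule ℝ ℝ).prod (Submodule.pi Set.univ fun _ => su2)

/-- `g_S`: elements `(0, X)` of `g` with `X j = 0` for `j ∉ S`. -/
def gS {n : ℕ} (S : Set (Fin n)) : Submodule ℝ (GV n) :=
  (⊥ : Submodule ℝ ℝ).prod (Submodule.pi Set.univ fun j =>
    letI := Classical.dec (j ∈ S)
    if j ∈ S then su2 else ⊥)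

/-- `ḡ_S`: elements `(t, X)` of `g` with `X j = 0` for `j ∈ S`. -/
def gBar {n : ℕ} (S : Set (Fin n)) : Submodule ℝ (GV n) :=
  (⊤ : Submodule ℝ ℝ).prod (Submodule.pi Set.univ fun j =>
    letI := Classical.dec (j ∈ S)
    if j ∈ S then (⊥ : Submodule ℝ (Matrix (Fin 2) (Fin 2) ℂ)) else su2)

/-- The projection `P_j : g → su(2)`, `(t, X) ↦ X j`. -/
def Pj {n : ℕ} (j : Fin n) : GV n →ₗ[ℝ] Matrix (Fin 2) (Fin 2) ℂ :=
  (LinearMap.proj j).comp (LinearMap.snd ℝ ℝ (Fin n → Matrix (Fin 2) (Fin 2) ℂ))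

/-- Apply the matrix `X` to qubit `j` of the state `ψ`. -/
def applySingle {n : ℕ} (j : Fin n) (X : Matrix (Fin 2) (Fin 2) ℂ) (ψ : QState n) : QState n :=
  fun I => ∑ k : Fin 2, X (I j) k * ψ (Function.update I j k)

/-- The infinitesimal local-unitary action: `dΦ_ψ(t, X) = i t ψ + Σ_j X_j ψ`. -/
def dPhi {n : ℕ} (ψ : QState n) : GV n →ₗ[ℝ] QState n where
  toFun x := fun I => Complex.I * (x.1 : ℂ) * ψ I + ∑ j, applySingle j (x.2 j) ψ I
  map_add' x y := by
    funext I
    simp only [applySingle, Prod.fst_add, Prod.snd_add, Pi.add_apply, Matrix.add_apply,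
      Complex.ofReal_add, add_mul, Finset.sum_add_distrib]
    ring
  map_smul' r x := by
    funext I
    simp only [applySingle, Prod.smul_fst, Prod.smul_snd, Pi.smul_apply, Matrix.smul_apply,
      smul_eq_mul, Complex.real_smul, Complex.ofReal_mul, RingHom.id_apply,
      Finset.mul_sum, mul_add]
    congr 1
    · ring
    · refine Finset.sum_congr rfl fun j _ => Finset.sum_congr rfl fun k _ => by ring

/-- The stabilizer subalgebra `K_ψ = {(t,X) ∈ g : dΦ_ψ(t,X) = 0}`. -/
def stab {n : ℕ} (ψ : QState n) : Submodule ℝ (GV n) :=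
  gSub n ⊓ LinearMap.ker (dPhi ψ)

/-- The componentwise bracket on `g` (zero in the `u(1)` component). -/
def gBracket {n : ℕ} (x y : GV n) : GV n :=
  (0, fun j => ⁅x.2 j, y.2 j⁆)

/-- An `su(2)` block for `ψ`: a set `S` of qubits with `dim (K_ψ ∩ g_S) > 1` and
`dim (K_ψ ∩ g_{S'}) = 0` for every proper subset `S' ⊊ S`. -/
def Su2Block {n : ℕ} (ψ : QState n) (S : Set (Fin n)) : Prop :=
  1 < Module.finrank ℝ ↥(stab ψ ⊓ gS S) ∧
  ∀ S' : Set (Fin n), S' ⊂ S → Module.finrank ℝ ↥(stab ψ ⊓ gS S') = 0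

/-- The union `B` of all `su(2)` blocks for `ψ`. -/
def blockUnion {n : ℕ} (ψ : QState n) : Set (Fin n) :=
  {q | ∃ S : Set (Fin n), Su2Block ψ S ∧ q ∈ S}

/-- The number `p` of `su(2)` blocks for `ψ`. -/
def blockCount {n : ℕ} (ψ : QState n) : ℕ :=
  {S : Set (Fin n) | Su2Block ψ S}.ncard

/-- `ψ` factors across the set `S` of qubits: `ψ(I) = φ(I|_S) · χ(I|_{Sᶜ})`. -/
def FactorsAcross {n : ℕ} (ψ : QState n) (S : Set (Fin n)) : Prop :=
  ∃ (φ : (↥S → Fin 2) → ℂ) (χ : (↥(Sᶜ) → Fin 2) → ℂ),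
    ∀ I : Fin n → Fin 2, ψ I = φ (fun j => I j.1) * χ (fun j => I j.1)

/-- `ψ` is a nonproduct state: it factors across no proper nonempty set of qubits. -/
def IsNonproduct {n : ℕ} (ψ : QState n) : Prop :=
  ∀ S : Set (Fin n), S ≠ ∅ → S ≠ Set.univ → ¬ FactorsAcross ψ S

/-- `ψ` has a single-qubit factor. -/
def HasSingleQubitFactor {n : ℕ} (ψ : QState n) : Prop :=
  ∃ j : Fin n, FactorsAcross ψ {j}

/-- Apply the local unitary (or just local linear) transformation `⊗_j U_j` to `ψ`. -/
def luApply {n : ℕ} (U : Fin n → Matrix (Fin 2) (Fin 2) ℂ) (ψ : QState n) : QState n :=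
  fun I => ∑ J : Fin n → Fin 2, (∏ j, U j (I j) (J j)) * ψ J

/-- Local unitary equivalence of `n`-qubit states. -/
def LUEquiv {n : ℕ} (ψ ψ' : QState n) : Prop :=
  ∃ U : Fin n → Matrix (Fin 2) (Fin 2) ℂ,
    (∀ j, U j ∈ Matrix.unitaryGroup (Fin 2) ℂ) ∧ ψ' = luApply U ψ

/-- The two-qubit singlet state `φ(a,b) = δ_{a0} δ_{b1} − δ_{a1} δ_{b0}`. -/
def singletFn : Fin 2 → Fin 2 → ℂ := fun a b =>
  if a = 0 ∧ b = 1 then 1 else if a = 1 ∧ b = 0 then -1 else 0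

/-- `ψ` has a singlet factor: it is LU-equivalent to a state that factors across a
two-element set of qubits, with the two-qubit factor being the singlet. -/
def HasSingletFactor {n : ℕ} (ψ : QState n) : Prop :=
  ∃ ψ' : QState n, LUEquiv ψ ψ' ∧ ∃ j k : Fin n, j ≠ k ∧
    ∃ χ : (↥(({j, k} : Set (Fin n))ᶜ) → Fin 2) → ℂ,
      ∀ I : Fin n → Fin 2, ψ' I = singletFn (I j) (I k) * χ (fun q => I q.1)

/-- The matrix `A = diag(i, −i) ∈ su(2)`. -/
def matA : Matrix (Fin 2) (Fin 2) ℂ := !![Complex.I, 0; 0, -Complex.I]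

/-- The generalized `n`-qubit GHZ state `α|0…0⟩ + β|1…1⟩`. -/
def ghz (n : ℕ) (α β : ℂ) : QState n := fun I =>
  if ∀ j, I j = 0 then α else if ∀ j, I j = 1 then β else 0


namespace S12

variable {n : ℕ}


lemma su2_e11 {X : Matrix (Fin 2) (Fin 2) ℂ} (h : X ∈ su2) : X 1 1 = - X 0 0 := by
  have := h.2
  rw [Matrix.trace_fin_two] at this
  linear_combination this

lemma su2_e10 {X : Matrix (Fin 2) (Fin 2) ℂ} (h : X ∈ su2) :
    X 1 0 = - (starRingEnd ℂ) (X 0 1) := by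
  have := congrFun (congrFun h.1 1) 0
  simp [Matrix.conjTranspose_apply] at this
  linear_combination this

lemma su2_e00 {X : Matrix (Fin 2) (Fin 2) ℂ} (h : X ∈ su2) :
    (starRingEnd ℂ) (X 0 0) = - X 0 0 := by
  have := congrFun (congrFun h.1 0) 0
  simpa [Matrix.conjTranspose_apply] using this

lemma su2_ext_zero {X : Matrix (Fin 2) (Fin 2) ℂ} (h : X ∈ su2)
    (h0 : X 0 0 = 0) (h1 : X 0 1 = 0) : X = 0 := by
  ext i j
  fin_cases i <;> fin_cases j <;>
    simp [h0, h1, su2_e11 h, su2_e10 h]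

lemma vec_ne_zero {u : Fin 2 → ℂ} (hu : u ≠ 0) : u 0 ≠ 0 ∨ u 1 ≠ 0 := by
  by_contra hcon
  push_neg at hcon
  exact hu (by funext i; fin_cases i <;> simp [hcon.1, hcon.2])

/-- "Z0": a traceless skew-Hermitian 2×2 matrix killing a nonzero vector is zero. -/
lemma su2_kill_eq_zero {X : Matrix (Fin 2) (Fin 2) ℂ} (h : X ∈ su2)
    {u : Fin 2 → ℂ} (hu : u ≠ 0) (hk : X.mulVec u = 0) : X = 0 := by
  set c := X 0 0 with hc
  set w := X 0 1 with hw
  have e1 : c * u 0 + w * u 1 = 0 := by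
    have := congrFun hk 0
    simpa [Matrix.mulVec, dotProduct, Fin.sum_univ_two, ← hc, ← hw] using this
  have e2 : (- (starRingEnd ℂ) w) * u 0 + (- c) * u 1 = 0 := by
    have := congrFun hk 1
    simpa [Matrix.mulVec, dotProduct, Fin.sum_univ_two, su2_e10 h, su2_e11 h,
      ← hc, ← hw] using this
  have e2s : (- w) * (starRingEnd ℂ) (u 0) + c * (starRingEnd ℂ) (u 1) = 0 := by
    have := congrArg (starRingEnd ℂ) e2
    simp only [map_add, map_mul, map_neg, map_zero, RingHomCompTriple.comp_apply,
      RingHom.id_apply, Complex.conj_conj, su2_e00 h] at this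
    linear_combination this + (starRingEnd ℂ) (u 1) * (su2_e00 h : (starRingEnd ℂ) c = -c)
  have key : w * ((Complex.normSq (u 0) : ℂ) + (Complex.normSq (u 1) : ℂ)) = 0 := by
    have m0 : u 0 * (starRingEnd ℂ) (u 0) = (Complex.normSq (u 0) : ℂ) := Complex.mul_conj _
    have m1 : u 1 * (starRingEnd ℂ) (u 1) = (Complex.normSq (u 1) : ℂ) := Complex.mul_conj _
    have t1 : w * (u 1 * (starRingEnd ℂ) (u 1)) = -(c * u 0 * (starRingEnd ℂ) (u 1)) := by
      linear_combination (starRingEnd ℂ) (u 1) * e1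
    have t2 : w * (u 0 * (starRingEnd ℂ) (u 0)) = c * (starRingEnd ℂ) (u 1) * u 0 := by
      linear_combination (- u 0) * e2s
    rw [← m0, ← m1]
    linear_combination t1 + t2
  have hor := vec_ne_zero hu
  have hnorm : ((Complex.normSq (u 0) : ℂ) + (Complex.normSq (u 1) : ℂ)) ≠ 0 := by
    rw [← Complex.ofReal_add, Ne, Complex.ofReal_eq_zero]
    rcases hor with h0 | h1
    · have := Complex.normSq_pos.2 h0
      nlinarith [Complex.normSq_nonneg (u 1)]
    · have := Complex.normSq_pos.2 h1
      nlinarith [Complex.normSq_nonneg (u 0)]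
  have hw0 : w = 0 := by
    rcases mul_eq_zero.1 key with h' | h'
    · exact h'
    · exact absurd h' hnorm
  rw [hw0] at e1 e2s
  simp only [zero_mul, neg_zero, add_zero, zero_add, mul_zero] at e1 e2s
  have hcu0 : c * u 0 = 0 := e1
  have hcu1 : c * u 1 = 0 := by
    have := congrArg (starRingEnd ℂ) e2s
    simp only [map_mul, map_zero, RingHomCompTriple.comp_apply, RingHom.id_apply,
      Complex.conj_conj, su2_e00 h] at this
    linear_combination - this + u 1 * (su2_e00 h : (starRingEnd ℂ) c = -c)
  have hc0 : c = 0 := by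
    rcases hor with h0 | h1
    · exact (mul_eq_zero.1 hcu0).resolve_right h0
    · exact (mul_eq_zero.1 hcu1).resolve_right h1
  exact su2_ext_zero h hc0 hw0


/-- su2 is closed under matrix commutator. -/
lemma su2_bracket_mem {X Y : Matrix (Fin 2) (Fin 2) ℂ} (hX : X ∈ su2) (hY : Y ∈ su2) :
    ⁅X, Y⁆ ∈ su2 := by
  constructor
  · rw [Ring.lie_def]
    simp only [Matrix.conjTranspose_sub, Matrix.conjTranspose_mul, hX.1, hY.1]
    simp [Matrix.mul_neg, Matrix.neg_mul, sub_eq_add_neg]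
  · rw [Ring.lie_def, Matrix.trace_sub, Matrix.trace_mul_comm, sub_self]

lemma smul_entry (r : ℝ) (X : Matrix (Fin 2) (Fin 2) ℂ) (i j : Fin 2) :
    (r • X) i j = (r : ℂ) * X i j := by
  simp [Matrix.smul_apply, Complex.real_smul]

/-- Two commuting su2 matrices are ℝ-parallel (if the first is nonzero). -/
lemma su2_commute_parallel {X Y : Matrix (Fin 2) (Fin 2) ℂ} (hX : X ∈ su2) (hY : Y ∈ su2)
    (hc : ⁅X, Y⁆ = 0) (hX0 : X ≠ 0) : ∃ r : ℝ, Y = r • X := by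
  rw [Ring.lie_def, sub_eq_zero] at hc
  set c := X 0 0 with hcd
  set w := X 0 1 with hwd
  set c' := Y 0 0 with hcd'
  set w' := Y 0 1 with hwd'
  have e00 : w * (starRingEnd ℂ) w' = w' * (starRingEnd ℂ) w := by
    have := congrFun (congrFun hc 0) 0
    simp only [Matrix.mul_apply, Fin.sum_univ_two, su2_e10 hX, su2_e10 hY,
      ← hcd, ← hwd, ← hcd', ← hwd'] at this
    linear_combination - this
  have e01 : c * w' = c' * w := by
    have := congrFun (congrFun hc 0) 1
    simp only [Matrix.mul_apply, Fin.sum_univ_two, su2_e11 hX, su2_e11 hY,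
      ← hcd, ← hwd, ← hcd', ← hwd'] at this
    linear_combination this / 2
  have key : ∀ r : ℝ, c' = (r:ℂ) * c → w' = (r:ℂ) * w → Y = r • X := by
    intro r h1 h2
    have hmem : Y - r • X ∈ su2 := sub_mem hY (su2.smul_mem r hX)
    have : Y - r • X = 0 := by
      apply su2_ext_zero hmem
      · simp only [Matrix.sub_apply, smul_entry, ← hcd, ← hcd', h1, sub_self]
      · simp only [Matrix.sub_apply, smul_entry, ← hwd, ← hwd', h2, sub_self]
    linear_combination (norm := abel) this
  by_cases hc0 : c = 0
  · -- X 0 0 = 0, so w ≠ 0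
    have hw0 : w ≠ 0 := fun hw0 => hX0 (su2_ext_zero hX hc0 hw0)
    have hc'0 : c' = 0 := by
      rcases mul_eq_zero.1 (show c' * w = 0 by rw [← e01, hc0, zero_mul]) with h | h
      · exact h
      · exact absurd h hw0
    set q : ℂ := w' / w with hq
    have hqre : (starRingEnd ℂ) q = q := by
      rw [hq, map_div₀]
      rw [div_eq_div_iff (by simpa using hw0) hw0]
      linear_combination e00
    refine ⟨q.re, key _ ?_ ?_⟩
    · rw [hc0, hc'0, mul_zero]
    · rw [Complex.conj_eq_iff_re.1 hqre, hq, div_mul_cancel₀ _ hw0]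
  · set q : ℂ := c' / c with hq
    have hsc : (starRingEnd ℂ) c = - c := by rw [hcd]; exact su2_e00 hX
    have hsc' : (starRingEnd ℂ) c' = - c' := by rw [hcd']; exact su2_e00 hY
    have hqre : (starRingEnd ℂ) q = q := by
      rw [hq, map_div₀, hsc, hsc', neg_div_neg_eq]
    refine ⟨q.re, key _ ?_ ?_⟩
    · rw [Complex.conj_eq_iff_re.1 hqre, hq, div_mul_cancel₀ _ hc0]
    · rw [Complex.conj_eq_iff_re.1 hqre, hq, div_mul_eq_mul_div, eq_div_iff hc0]
      linear_combination e01



def E1 : Matrix (Fin 2) (Fin 2) ℂ := !![Complex.I, 0; 0, -Complex.I]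
def E2 : Matrix (Fin 2) (Fin 2) ℂ := !![0, 1; -1, 0]
def E3 : Matrix (Fin 2) (Fin 2) ℂ := !![0, Complex.I; Complex.I, 0]

lemma su2_decomp {X : Matrix (Fin 2) (Fin 2) ℂ} (h : X ∈ su2) :
    X = (X 0 0).im • E1 + (X 0 1).re • E2 + (X 0 1).im • E3 := by
  have hre : (X 0 0).re = 0 := by
    have := congrArg Complex.re (su2_e00 h)
    simp [Complex.conj_re] at this
    linarith
  have e10 := su2_e10 h
  have e11 := su2_e11 h
  have hcw : (starRingEnd ℂ) (X 0 1) = ((X 0 1).re : ℂ) - ((X 0 1).im : ℂ) * Complex.I := by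
    apply Complex.ext <;> simp
  have h00 : X 0 0 = ((X 0 0).im : ℂ) * Complex.I := by
    rw [← Complex.re_add_im (X 0 0), hre]; simp
  apply Matrix.ext
  simp only [Fin.forall_fin_two, Matrix.add_apply, smul_entry, E1, E2, E3]
  refine ⟨⟨?_, ?_⟩, ?_, ?_⟩ <;>
    simp only [Matrix.cons_val', Matrix.cons_val_zero, Matrix.cons_val_one, Matrix.head_cons,
      Matrix.empty_val', Matrix.cons_val_fin_one, Matrix.of_apply, e10, e11, hcw]
  · rw [h00]; simp [mul_comm]
  · rw [← Complex.re_add_im (X 0 1)]; simp [mul_comm]; try ring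
  · rw [← Complex.re_add_im (X 0 1)]; simp [mul_comm]; try ring
  · rw [h00]; simp [mul_comm]; try ring

lemma su2_finrank_le : finrank ℝ su2 ≤ 3 := by
  have hle : su2 ≤ Submodule.span ℝ (Set.range ![E1, E2, E3]) := by
    intro X hX
    rw [su2_decomp hX]
    refine add_mem (add_mem ?_ ?_) ?_
    · exact Submodule.smul_mem _ _ (Submodule.subset_span ⟨0, rfl⟩)
    · exact Submodule.smul_mem _ _ (Submodule.subset_span ⟨1, rfl⟩)
    · exact Submodule.smul_mem _ _ (Submodule.subset_span ⟨2, rfl⟩)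
  calc finrank ℝ su2 ≤ finrank ℝ (Submodule.span ℝ (Set.range ![E1, E2, E3])) :=
        Submodule.finrank_mono hle
    _ ≤ (Set.range ![E1, E2, E3]).toFinset.card := finrank_span_le_card _
    _ ≤ 3 := by
        rw [Set.toFinset_range]
        exact le_trans (Finset.card_image_le) (by simp)

/-- A set of pairwise-commuting su2 matrices spans at most one dimension. -/
lemma pairwise_commute_finrank_le_one (V : Submodule ℝ (Matrix (Fin 2) (Fin 2) ℂ))
    (hV : V ≤ su2) (hcomm : ∀ a ∈ V, ∀ b ∈ V, ⁅a, b⁆ = 0) : finrank ℝ V ≤ 1 := by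
  by_cases hbot : V = ⊥
  · subst hbot; simp
  · obtain ⟨a, ha, ha0⟩ := (Submodule.ne_bot_iff V).1 hbot
    have hle : V ≤ Submodule.span ℝ {a} := by
      intro b hb
      obtain ⟨r, hr⟩ := su2_commute_parallel (hV ha) (hV hb) (hcomm a ha b hb) ha0
      exact Submodule.mem_span_singleton.2 ⟨r, hr.symm⟩
    calc finrank ℝ V ≤ finrank ℝ (Submodule.span ℝ ({a} : Set _)) := Submodule.finrank_mono hle
      _ = 1 := finrank_span_singleton ha0

/-- An su2 matrix commuting with two "independent" su2 matrices is zero. -/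
lemma commute_indep_eq_zero {a b c : Matrix (Fin 2) (Fin 2) ℂ}
    (ha : a ∈ su2) (hb : b ∈ su2) (hc : c ∈ su2)
    (hca : ⁅c, a⁆ = 0) (hcb : ⁅c, b⁆ = 0)
    (ha0 : a ≠ 0) (hab : ∀ r : ℝ, b ≠ r • a) : c = 0 := by
  by_contra hc0
  obtain ⟨r1, hr1⟩ := su2_commute_parallel hc ha hca hc0
  obtain ⟨r2, hr2⟩ := su2_commute_parallel hc hb hcb hc0
  have hr1ne : r1 ≠ 0 := by
    rintro rfl
    rw [zero_smul] at hr1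
    exact ha0 hr1
  exact hab (r2 / r1) (by rw [hr2, hr1, smul_smul, div_mul_cancel₀ _ hr1ne])



lemma mem_gSub {x : GV n} : x ∈ gSub n ↔ ∀ k, x.2 k ∈ su2 := by
  constructor
  · intro h k
    exact (Submodule.mem_prod.1 h).2 k trivial
  · intro h
    exact Submodule.mem_prod.2 ⟨trivial, fun k _ => h k⟩

lemma mem_stab {ψ : QState n} {x : GV n} :
    x ∈ stab ψ ↔ x ∈ gSub n ∧ dPhi ψ x = 0 := by
  rw [stab, Submodule.mem_inf, LinearMap.mem_ker]

/-- `applySingle` as a ℂ-linear endomorphism. -/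
def asL (j : Fin n) (X : Matrix (Fin 2) (Fin 2) ℂ) : QState n →ₗ[ℂ] QState n where
  toFun ψ := applySingle j X ψ
  map_add' φ χ := by
    funext I
    simp [applySingle, Finset.sum_add_distrib, mul_add]
  map_smul' c φ := by
    funext I
    simp only [applySingle, Pi.smul_apply, smul_eq_mul, RingHom.id_apply, Finset.mul_sum]
    exact Finset.sum_congr rfl fun k _ => by ring

@[simp] lemma asL_apply (j : Fin n) (X : Matrix (Fin 2) (Fin 2) ℂ) (ψ : QState n) :
    asL j X ψ = applySingle j X ψ := rfl

lemma asL_matrix_sub (j : Fin n) (A B : Matrix (Fin 2) (Fin 2) ℂ) :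
    asL (n := n) j (A - B) = asL j A - asL j B := by
  apply LinearMap.ext; intro ψ; funext I
  simp [applySingle, Matrix.sub_apply, sub_mul, Finset.sum_sub_distrib]

@[simp] lemma asL_matrix_zero (j : Fin n) : asL (n := n) j 0 = 0 := by
  apply LinearMap.ext; intro ψ; funext I
  simp [applySingle]

lemma asL_same (j : Fin n) (X Y : Matrix (Fin 2) (Fin 2) ℂ) :
    asL (n := n) j X * asL j Y = asL j (X * Y) := by
  apply LinearMap.ext; intro ψ; funext I
  simp only [Module.End.mul_apply, asL_apply, applySingle]
  have step : ∀ x : Fin 2, X (I j) x * ∑ k, Y ((Function.update I j x) j) k *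
      ψ (Function.update (Function.update I j x) j k)
      = ∑ k, X (I j) x * Y x k * ψ (Function.update I j k) := by
    intro x
    rw [Finset.mul_sum]
    refine Finset.sum_congr rfl fun k _ => ?_
    rw [Function.update_self, Function.update_idem]
    ring
  rw [Finset.sum_congr rfl fun x _ => step x, Finset.sum_comm]
  refine Finset.sum_congr rfl fun l _ => ?_
  rw [Matrix.mul_apply, Finset.sum_mul]

lemma asL_comm {j k : Fin n} (h : j ≠ k) (X Y : Matrix (Fin 2) (Fin 2) ℂ) :
    asL (n := n) j X * asL k Y = asL k Y * asL j X := by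
  apply LinearMap.ext; intro ψ; funext I
  simp only [Module.End.mul_apply, asL_apply, applySingle]
  have stepL : ∀ a : Fin 2, X (I j) a * ∑ b, Y ((Function.update I j a) k) b *
      ψ (Function.update (Function.update I j a) k b)
      = ∑ b, X (I j) a * Y (I k) b * ψ (Function.update (Function.update I j a) k b) := by
    intro a
    rw [Finset.mul_sum]
    refine Finset.sum_congr rfl fun b _ => ?_
    rw [Function.update_of_ne h.symm]
    ring
  have stepR : ∀ b : Fin 2, Y (I k) b * ∑ a, X ((Function.update I k b) j) a *
      ψ (Function.update (Function.update I k b) j a)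
      = ∑ a, X (I j) a * Y (I k) b * ψ (Function.update (Function.update I j a) k b) := by
    intro b
    rw [Finset.mul_sum]
    refine Finset.sum_congr rfl fun a _ => ?_
    rw [Function.update_of_ne h, Function.update_comm h]
    ring
  rw [Finset.sum_congr rfl fun a _ => stepL a, Finset.sum_congr rfl fun b _ => stepR b,
    Finset.sum_comm]

/-- The operator corresponding to an element of `g`. -/
def opF (x : GV n) : QState n →ₗ[ℂ] QState n :=
  (Complex.I * x.1) • 1 + ∑ j, asL j (x.2 j)

lemma dPhi_eq_opF (ψ : QState n) (x : GV n) : dPhi ψ x = opF x ψ := by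
  funext I
  simp only [dPhi, opF, LinearMap.coe_mk, AddHom.coe_mk, LinearMap.add_apply,
    LinearMap.smul_apply, Module.End.one_apply, Pi.add_apply, Pi.smul_apply, smul_eq_mul,
    LinearMap.coe_sum, Finset.sum_apply, asL_apply]

lemma end_commutator {M : Type*} [AddCommGroup M] [Module ℂ M] (a b : ℂ)
    (S S' : M →ₗ[ℂ] M) :
    (a • 1 + S) * (b • 1 + S') - (b • 1 + S') * (a • 1 + S) = S * S' - S' * S := by
  simp only [add_mul, mul_add, smul_add, smul_mul_assoc, mul_smul_comm, one_mul, mul_one,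
    smul_smul, mul_comm a b]
  abel

lemma opF_commutator (x y : GV n) :
    opF x * opF y - opF y * opF x = opF (gBracket x y) - (Complex.I * (0:ℝ)) • 1 := by
  rw [opF, opF, end_commutator]
  have h1 : (∑ j, asL (n := n) j (x.2 j)) * (∑ k, asL k (y.2 k))
      = ∑ j, ∑ k, asL j (x.2 j) * asL k (y.2 k) := by
    rw [Finset.sum_mul]
    exact Finset.sum_congr rfl fun j _ => Finset.mul_sum _ _ _
  have h2 : (∑ k, asL (n := n) k (y.2 k)) * (∑ j, asL j (x.2 j))
      = ∑ j, ∑ k, asL k (y.2 k) * asL j (x.2 j) := by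
    rw [Finset.sum_mul, Finset.sum_comm]
    exact Finset.sum_congr rfl fun j _ => Finset.mul_sum _ _ _
  rw [h1, h2, ← Finset.sum_sub_distrib]
  have h3 : ∀ j : Fin n, (∑ k, asL j (x.2 j) * asL k (y.2 k)) -
      (∑ k, asL k (y.2 k) * asL j (x.2 j)) = asL j (⁅x.2 j, y.2 j⁆) := by
    intro j
    rw [← Finset.sum_sub_distrib]
    rw [Finset.sum_eq_single j]
    · rw [asL_same, asL_same, Ring.lie_def, asL_matrix_sub]
    · intro k _ hkj
      rw [asL_comm (Ne.symm hkj), sub_self]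
    · intro h; exact absurd (Finset.mem_univ j) h
  rw [Finset.sum_congr rfl fun j _ => h3 j]
  simp [opF, gBracket]

lemma stab_bracket_mem {ψ : QState n} {x y : GV n}
    (hx : x ∈ stab ψ) (hy : y ∈ stab ψ) : gBracket x y ∈ stab ψ := by
  rw [mem_stab] at hx hy ⊢
  constructor
  · rw [mem_gSub]
    intro k
    exact su2_bracket_mem (mem_gSub.1 hx.1 k) (mem_gSub.1 hy.1 k)
  · have hxe : opF x ψ = 0 := by rw [← dPhi_eq_opF]; exact hx.2
    have hye : opF y ψ = 0 := by rw [← dPhi_eq_opF]; exact hy.2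
    rw [dPhi_eq_opF]
    have hc := congrArg (fun (f : QState n →ₗ[ℂ] QState n) => f ψ) (opF_commutator x y)
    simp only [LinearMap.sub_apply, Module.End.mul_apply, LinearMap.smul_apply,
      Module.End.one_apply] at hc
    rw [hxe, hye, map_zero, map_zero] at hc
    have : (0 : QState n) = opF (gBracket x y) ψ - (Complex.I * ((0:ℝ):ℂ)) • ψ := by
      simpa using hc
    simpa using this.symm

set_option maxHeartbeats 1000000
set_option synthInstance.maxHeartbeats 400000
variable {n : ℕ}

def bform : GV n →ₗ[ℝ] GV n →ₗ[ℝ] ℝ :=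
  LinearMap.mk₂ ℝ
    (fun x y => x.1 * y.1 + ∑ k, ∑ i, ∑ j,
      ((x.2 k i j).re * (y.2 k i j).re + (x.2 k i j).im * (y.2 k i j).im))
    (by
      intro x x' y
      simp only [Prod.fst_add, Prod.snd_add, Pi.add_apply, Matrix.add_apply, Complex.add_re,
        Complex.add_im, Finset.sum_add_distrib, add_mul, mul_add]
      ring)
    (by
      intro r x y
      simp only [Prod.smul_fst, Prod.smul_snd, Pi.smul_apply, Matrix.smul_apply, smul_eq_mul,
        Complex.real_smul, Complex.re_ofReal_mul, Complex.im_ofReal_mul, Finset.mul_sum, mul_add]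
      ring_nf)
    (by
      intro x y y'
      simp only [Prod.fst_add, Prod.snd_add, Pi.add_apply, Matrix.add_apply, Complex.add_re,
        Complex.add_im, Finset.sum_add_distrib, add_mul, mul_add]
      ring)
    (by
      intro r x y
      simp only [Prod.smul_fst, Prod.smul_snd, Pi.smul_apply, Matrix.smul_apply, smul_eq_mul,
        Complex.real_smul, Complex.re_ofReal_mul, Complex.im_ofReal_mul, Finset.mul_sum, mul_add]
      ring_nf)

lemma bform_apply (x y : GV n) : bform x y = x.1 * y.1 + ∑ k, ∑ i, ∑ j,
    ((x.2 k i j).re * (y.2 k i j).re + (x.2 k i j).im * (y.2 k i j).im) := rfl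

lemma bform_self_nonneg (x : GV n) : 0 ≤ bform x x := by
  rw [bform_apply]
  have : ∀ k : Fin n, (0:ℝ) ≤ ∑ i, ∑ j,
      ((x.2 k i j).re * (x.2 k i j).re + (x.2 k i j).im * (x.2 k i j).im) := by
    intro k
    refine Finset.sum_nonneg fun i _ => Finset.sum_nonneg fun j _ => by nlinarith
  have h2 := Finset.sum_nonneg fun k (_ : k ∈ Finset.univ) => this k
  nlinarith [mul_self_nonneg x.1]

lemma bform_self_eq_zero {x : GV n} (h : bform x x = 0) : x = 0 := by
  rw [bform_apply] at h
  have hSnn : ∀ k : Fin n, (k ∈ Finset.univ) → (0:ℝ) ≤ ∑ i, ∑ j,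
      ((x.2 k i j).re * (x.2 k i j).re + (x.2 k i j).im * (x.2 k i j).im) := by
    intro k _
    refine Finset.sum_nonneg fun i _ => Finset.sum_nonneg fun j _ => by nlinarith
  have hsum_nn := Finset.sum_nonneg hSnn
  have h1 : x.1 = 0 := by nlinarith [mul_self_nonneg x.1]
  have hS : ∑ k, ∑ i, ∑ j,
      ((x.2 k i j).re * (x.2 k i j).re + (x.2 k i j).im * (x.2 k i j).im) = 0 := by
    nlinarith [mul_self_nonneg x.1]
  have hk := (Finset.sum_eq_zero_iff_of_nonneg hSnn).1 hS
  have hentry : ∀ k : Fin n, ∀ i j : Fin 2, x.2 k i j = 0 := by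
    intro k i j
    have hki := hk k (Finset.mem_univ k)
    have hinn : ∀ i : Fin 2, (i ∈ Finset.univ) → (0:ℝ) ≤ ∑ j,
        ((x.2 k i j).re * (x.2 k i j).re + (x.2 k i j).im * (x.2 k i j).im) :=
      fun i _ => Finset.sum_nonneg fun j _ => by nlinarith
    have hi := (Finset.sum_eq_zero_iff_of_nonneg hinn).1 hki i (Finset.mem_univ i)
    have hjnn : ∀ j : Fin 2, (j ∈ Finset.univ) → (0:ℝ) ≤
        ((x.2 k i j).re * (x.2 k i j).re + (x.2 k i j).im * (x.2 k i j).im) :=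
      fun j _ => by nlinarith
    have hj := (Finset.sum_eq_zero_iff_of_nonneg hjnn).1 hi j (Finset.mem_univ j)
    have hre : (x.2 k i j).re = 0 := by nlinarith
    have him : (x.2 k i j).im = 0 := by nlinarith
    exact Complex.ext hre him
  have h2 : x.2 = 0 := by
    funext k
    exact Matrix.ext fun i j => hentry k i j
  exact Prod.ext h1 h2

/-- The orthogonal complement of a submodule w.r.t. `bform`. -/
def orth (V : Submodule ℝ (GV n)) : Submodule ℝ (GV n) where
  carrier := {x | ∀ v ∈ V, bform x v = 0}
  add_mem' := by
    intro a b ha hb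
    intro v hv
    rw [map_add, LinearMap.add_apply, ha v hv, hb v hv, add_zero]
  zero_mem' := by intro v hv; rw [map_zero, LinearMap.zero_apply]
  smul_mem' := by
    intro r a ha v hv
    rw [map_smul, LinearMap.smul_apply, ha v hv, smul_zero]

lemma mem_orth {V : Submodule ℝ (GV n)} {x : GV n} :
    x ∈ orth V ↔ ∀ v ∈ V, bform x v = 0 := Iff.rfl

/-- Orthogonal splitting: for `B ≤ A`, `A = B ⊕ (A ⊓ Bᗮ)`. -/
lemma split (A B : Submodule ℝ (GV n)) (hBA : B ≤ A) :
    finrank ℝ A = finrank ℝ B + finrank ℝ (A ⊓ orth B : Submodule ℝ (GV n)) ∧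
    A = B ⊔ (A ⊓ orth B) := by
  classical
  -- the map to the dual of B
  set f : ↥A →ₗ[ℝ] Module.Dual ℝ ↥B :=
    { toFun := fun x => (bform (x : GV n)).comp B.subtype
      map_add' := by intro a b; ext c; simp
      map_smul' := by intro r a; ext c; simp } with hf
  have hker : ∀ x : ↥A, f x = 0 ↔ (x : GV n) ∈ orth B := by
    intro x
    constructor
    · intro hx v hv
      have := congrFun (congrArg DFunLike.coe hx) ⟨v, hv⟩
      simpa [hf] using this
    · intro hx
      ext ⟨v, hv⟩
      simpa [hf] using hx v hv
  -- rank of the image is finrank B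
  have hrange : finrank ℝ (LinearMap.range f) = finrank ℝ B := by
    apply le_antisymm
    · calc finrank ℝ (LinearMap.range f) ≤ finrank ℝ (Module.Dual ℝ ↥B) :=
            Submodule.finrank_le _
        _ = finrank ℝ B := Subspace.dual_finrank_eq
    · -- B injects into the range via f
      have hinj : Function.Injective (fun (b : ↥B) => f ⟨(b : GV n), hBA b.2⟩) := by
        intro b b' hbb
        have h0 : f ⟨((b - b' : ↥B) : GV n), hBA (b - b').2⟩ = 0 := by
          have : ((b - b' : ↥B) : GV n) = (b : GV n) - (b' : GV n) := rfl
          ext ⟨v, hv⟩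
          have h1 := congrFun (congrArg DFunLike.coe hbb) ⟨v, hv⟩
          simp only [hf, LinearMap.coe_mk, AddHom.coe_mk, LinearMap.coe_comp,
            Function.comp_apply, Submodule.coe_subtype] at h1 ⊢
          rw [this, map_sub, LinearMap.sub_apply]
          simpa using sub_eq_zero_of_eq h1
        have hmem := (hker _).1 h0
        have : bform ((b - b' : ↥B) : GV n) ((b - b' : ↥B) : GV n) = 0 :=
          hmem _ (b - b').2
        have := bform_self_eq_zero this
        have : (b - b' : ↥B) = 0 := Subtype.ext (by rw [this]; rfl)
        exact sub_eq_zero.1 this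
      have : ∀ b : ↥B, f ⟨(b : GV n), hBA b.2⟩ ∈ LinearMap.range f := fun b => ⟨_, rfl⟩
      let g : ↥B →ₗ[ℝ] ↥(LinearMap.range f) :=
        { toFun := fun b => ⟨f ⟨(b : GV n), hBA b.2⟩, this b⟩
          map_add' := by intro a b; apply Subtype.ext; simp [hf]; ext c; simp
          map_smul' := by intro r a; apply Subtype.ext; simp [hf]; ext c; simp }
      have hginj : Function.Injective g := by
        intro a b hab
        exact hinj (congrArg Subtype.val hab)
      exact LinearMap.finrank_le_finrank_of_injective hginj
  have hkerrank : finrank ℝ (LinearMap.ker f) =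
      finrank ℝ (A ⊓ orth B : Submodule ℝ (GV n)) := by
    have hkereq : LinearMap.ker f = Submodule.comap A.subtype (orth B) := by
      ext x
      rw [LinearMap.mem_ker, Submodule.mem_comap, hker]
      rfl
    rw [hkereq]
    have e := Submodule.equivMapOfInjective A.subtype (Submodule.injective_subtype A)
      (Submodule.comap A.subtype (orth B))
    rw [Submodule.map_comap_subtype] at e
    exact e.finrank_eq
  have hrn := LinearMap.finrank_range_add_finrank_ker f
  have hdim : finrank ℝ A = finrank ℝ B + finrank ℝ (A ⊓ orth B : Submodule ℝ (GV n)) := by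
    rw [← hrn, hrange, hkerrank]
  refine ⟨hdim, ?_⟩
  have hdisj : B ⊓ (A ⊓ orth B) = ⊥ := by
    rw [eq_bot_iff]
    intro x hx
    have hxB : x ∈ B := hx.1
    have hxO : x ∈ orth B := hx.2.2
    have : bform x x = 0 := hxO x hxB
    simpa using bform_self_eq_zero this
  have hle : B ⊔ (A ⊓ orth B) ≤ A := sup_le hBA inf_le_left
  have hr := Submodule.finrank_sup_add_finrank_inf_eq B (A ⊓ orth B)
  rw [hdisj] at hr
  simp only [finrank_bot, add_zero] at hr
  exact (Submodule.eq_of_le_of_finrank_le hle (by rw [hr, ← hdim])).symm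



/-! ### Bracket algebra on `GV n` -/

lemma gBracket_fst (x y : GV n) : (gBracket x y).1 = 0 := rfl

lemma gBracket_snd (x y : GV n) (k : Fin n) : (gBracket x y).2 k = ⁅x.2 k, y.2 k⁆ := rfl

lemma Pj_apply (k : Fin n) (x : GV n) : Pj k x = x.2 k := rfl

lemma gBracket_add_left (x x' y : GV n) :
    gBracket (x + x') y = gBracket x y + gBracket x' y := by
  apply Prod.ext
  · simp [gBracket]
  · funext k
    simp [gBracket, add_lie]
    rw [Ring.lie_def, Ring.lie_def, Ring.lie_def, Matrix.add_mul, Matrix.mul_add]; abel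

lemma gBracket_add_right (x y y' : GV n) :
    gBracket x (y + y') = gBracket x y + gBracket x y' := by
  apply Prod.ext
  · simp [gBracket]
  · funext k
    simp [gBracket, lie_add]
    rw [Ring.lie_def, Ring.lie_def, Ring.lie_def, Matrix.add_mul, Matrix.mul_add]; abel

lemma gBracket_smul_left (r : ℝ) (x y : GV n) :
    gBracket (r • x) y = r • gBracket x y := by
  apply Prod.ext
  · simp [gBracket]
  · funext k
    simp only [gBracket, Ring.lie_def, Prod.smul_snd, Pi.smul_apply, Matrix.smul_mul,
      Matrix.mul_smul, smul_sub]

lemma gBracket_smul_right (r : ℝ) (x y : GV n) :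
    gBracket x (r • y) = r • gBracket x y := by
  apply Prod.ext
  · simp [gBracket]
  · funext k
    simp only [gBracket, Ring.lie_def, Prod.smul_snd, Pi.smul_apply, Matrix.smul_mul,
      Matrix.mul_smul, smul_sub]

lemma gBracket_zero_left (y : GV n) : gBracket 0 y = 0 := by
  apply Prod.ext
  · simp [gBracket]
  · funext k
    simp [gBracket]
    rw [Ring.lie_def]; simp

lemma gBracket_zero_right (x : GV n) : gBracket x 0 = 0 := by
  apply Prod.ext
  · simp [gBracket]
  · funext k
    simp [gBracket]
    rw [Ring.lie_def]; simp

lemma gBracket_self (x : GV n) : gBracket x x = 0 := by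
  apply Prod.ext
  · simp [gBracket]
  · funext k
    simp [gBracket]
    rw [Ring.lie_def]; simp

lemma gBracket_antisymm (x y : GV n) : gBracket y x = - gBracket x y := by
  apply Prod.ext
  · simp [gBracket]
  · funext k
    simp only [gBracket, Ring.lie_def, Prod.snd_neg, Pi.neg_apply, neg_sub]

lemma gBracket_leibniz (z x y : GV n) :
    gBracket z (gBracket x y) = gBracket (gBracket z x) y + gBracket x (gBracket z y) := by
  apply Prod.ext
  · simp [gBracket]
  · funext k
    simp only [gBracket, Ring.lie_def, Prod.snd_add, Pi.add_apply, Matrix.sub_mul,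
      Matrix.mul_sub]
    noncomm_ring

/-! ### Invariance of the form -/

lemma re_sum {α : Type*} (s : Finset α) (f : α → ℂ) :
    (∑ i ∈ s, f i).re = ∑ i ∈ s, (f i).re :=
  map_sum Complex.reAddGroupHom f s

lemma frob_eq_trace (M N : Matrix (Fin 2) (Fin 2) ℂ) :
    (∑ i, ∑ j, ((M i j).re * (N i j).re + (M i j).im * (N i j).im))
      = (Matrix.trace (Mᴴ * N)).re := by
  rw [Matrix.trace]
  simp only [Matrix.diag_apply, Matrix.mul_apply, Matrix.conjTranspose_apply]
  rw [re_sum, Finset.sum_comm]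
  refine Finset.sum_congr rfl fun i _ => ?_
  rw [re_sum]
  refine Finset.sum_congr rfl fun j _ => ?_
  simp only [Complex.mul_re, RCLike.star_def, Complex.conj_re, Complex.conj_im]
  ring

lemma skew_comm_trace {A B C : Matrix (Fin 2) (Fin 2) ℂ}
    (hA : Aᴴ = -A) (hB : Bᴴ = -B) :
    Matrix.trace ((⁅A, B⁆)ᴴ * C) + Matrix.trace (Bᴴ * ⁅A, C⁆) = 0 := by
  have h1 : (⁅A, B⁆)ᴴ = B * A - A * B := by
    rw [Ring.lie_def, Matrix.conjTranspose_sub, Matrix.conjTranspose_mul,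
      Matrix.conjTranspose_mul, hA, hB]
    simp [Matrix.neg_mul, Matrix.mul_neg]
  rw [h1, hB, Ring.lie_def]
  rw [Matrix.sub_mul, Matrix.neg_mul, Matrix.mul_sub]
  rw [Matrix.trace_sub, Matrix.trace_neg, Matrix.trace_sub]
  simp only [Matrix.mul_assoc]
  have h2 : (B * (C * A)).trace = (A * (B * C)).trace := by
    rw [← Matrix.mul_assoc, ← Matrix.mul_assoc, Matrix.trace_mul_cycle B C A]
  linear_combination h2

lemma bform_invariant {x y z : GV n} (hx : ∀ k, x.2 k ∈ su2) (hy : ∀ k, y.2 k ∈ su2) :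
    bform (gBracket x y) z + bform y (gBracket x z) = 0 := by
  rw [bform_apply, bform_apply]
  simp only [gBracket_fst, zero_mul, mul_zero, zero_add]
  rw [← Finset.sum_add_distrib]
  apply Finset.sum_eq_zero
  intro k _
  simp only [gBracket_snd]
  rw [frob_eq_trace, frob_eq_trace, ← Complex.add_re,
    skew_comm_trace (hx k).1 (hy k).1, Complex.zero_re]


/-! ### Ideals -/

/-- `I` is an ideal of `S`. -/
def IsIdeal (S I : Submodule ℝ (GV n)) : Prop :=
  I ≤ S ∧ ∀ s ∈ S, ∀ x ∈ I, gBracket s x ∈ I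

/-- The span of brackets. -/
def brSpan (A B : Submodule ℝ (GV n)) : Submodule ℝ (GV n) :=
  Submodule.span ℝ {z | ∃ a ∈ A, ∃ b ∈ B, z = gBracket a b}

lemma bracket_mem_brSpan {A B : Submodule ℝ (GV n)} {a b : GV n}
    (ha : a ∈ A) (hb : b ∈ B) : gBracket a b ∈ brSpan A B :=
  Submodule.subset_span ⟨a, ha, b, hb, rfl⟩

lemma brSpan_le {A B C : Submodule ℝ (GV n)}
    (h : ∀ a ∈ A, ∀ b ∈ B, gBracket a b ∈ C) : brSpan A B ≤ C := by
  rw [brSpan, Submodule.span_le]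
  rintro z ⟨a, ha, b, hb, rfl⟩
  exact h a ha b hb

lemma brSpan_eq_bot {A B : Submodule ℝ (GV n)}
    (h : ∀ a ∈ A, ∀ b ∈ B, gBracket a b = 0) : brSpan A B = ⊥ := by
  rw [eq_bot_iff]
  exact brSpan_le fun a ha b hb => by rw [h a ha b hb]; exact Submodule.zero_mem ⊥

/-- The bracket span of an ideal with itself is again an ideal. -/
lemma brSpan_isIdeal {S I : Submodule ℝ (GV n)} (hI : IsIdeal S I) :
    IsIdeal S (brSpan I I) := by
  constructor
  · exact le_trans (brSpan_le fun a ha b hb => hI.2 a (hI.1 ha) b hb) hI.1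
  · intro s hs x hx
    induction hx using Submodule.span_induction with
    | mem z hz =>
      obtain ⟨a, ha, b, hb, rfl⟩ := hz
      rw [gBracket_leibniz]
      exact Submodule.add_mem _
        (bracket_mem_brSpan (hI.2 s hs a ha) hb)
        (bracket_mem_brSpan ha (hI.2 s hs b hb))
    | zero =>
      rw [gBracket_zero_right]
      exact Submodule.zero_mem _
    | add a b _ _ hpa hpb =>
      rw [gBracket_add_right]
      exact Submodule.add_mem _ hpa hpb
    | smul r a _ hpa =>
      rw [gBracket_smul_right]
      exact Submodule.smul_mem _ r hpa

lemma brSpan_fst_eq_zero {A B : Submodule ℝ (GV n)} {x : GV n}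
    (hx : x ∈ brSpan A B) : x.1 = 0 := by
  induction hx using Submodule.span_induction with
  | mem z hz => obtain ⟨a, _, b, _, rfl⟩ := hz; rfl
  | zero => rfl
  | add a b _ _ hpa hpb => rw [Prod.fst_add, hpa, hpb, add_zero]
  | smul r a _ hpa => rw [Prod.smul_fst, hpa, smul_zero]

/-- The set of "active" qubits of `S`. -/
def TS (S : Submodule ℝ (GV n)) : Finset (Fin n) :=
  @Finset.filter _ (fun k => Submodule.map (Pj k) S ≠ ⊥) (Classical.decPred _) Finset.univ

lemma mem_TS {S : Submodule ℝ (GV n)} {k : Fin n} :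
    k ∈ TS S ↔ Submodule.map (Pj k) S ≠ ⊥ := by
  classical
  simp [TS]

lemma map_Pj_le_su2 {S : Submodule ℝ (GV n)} (hS : ∀ x ∈ S, ∀ k, x.2 k ∈ su2) (k : Fin n) :
    Submodule.map (Pj k) S ≤ su2 := by
  rintro c ⟨x, hx, rfl⟩
  exact hS x hx k

lemma map_Pj_eq_bot {S : Submodule ℝ (GV n)} {k : Fin n}
    (h : ∀ x ∈ S, x.2 k = 0) : Submodule.map (Pj k) S = ⊥ := by
  rw [eq_bot_iff]
  rintro c ⟨x, hx, rfl⟩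
  rw [Pj_apply, h x hx]
  exact Submodule.zero_mem ⊥

lemma exists_ne_zero_point {ψ : QState n} (hψ : ψ ≠ 0) : ∃ I₀, ψ I₀ ≠ 0 := by
  by_contra hcon
  push_neg at hcon
  exact hψ (funext fun I => hcon I)

lemma applySingle_zero_matrix (j : Fin n) (ψ : QState n) : applySingle j 0 ψ = 0 := by
  funext I
  simp [applySingle]

lemma dPhi_apply (ψ : QState n) (x : GV n) (I : Fin n → Fin 2) :
    dPhi ψ x I = Complex.I * (x.1 : ℂ) * ψ I + ∑ j, applySingle j (x.2 j) ψ I := rfl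

/-- If `x` stabilizes `ψ` and has zero matrix part, its phase part vanishes. -/
lemma stab_fst_eq_zero {ψ : QState n} (hψ : ψ ≠ 0) {x : GV n}
    (hx : x ∈ stab ψ) (h2 : ∀ j, x.2 j = 0) : x.1 = 0 := by
  obtain ⟨I₀, hI₀⟩ := exists_ne_zero_point hψ
  have hd : dPhi ψ x = 0 := (mem_stab.1 hx).2
  have := congrFun hd I₀
  rw [dPhi_apply] at this
  have hsum : ∑ j, applySingle j (x.2 j) ψ I₀ = 0 := by
    apply Finset.sum_eq_zero
    intro j _
    rw [h2 j, applySingle_zero_matrix]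
    rfl
  rw [hsum, add_zero] at this
  have : (x.1 : ℂ) = 0 := by
    rcases mul_eq_zero.1 this with h | h
    · rcases mul_eq_zero.1 h with h' | h'
      · exact absurd h' Complex.I_ne_zero
      · exact h'
    · exact absurd h hI₀
  exact_mod_cast this

/-- Stabilizer elements supported on one qubit with zero phase bracket to zero. -/
lemma singleton_support_bracket {ψ : QState n} (hψ : ψ ≠ 0) {I : Submodule ℝ (GV n)}
    (hIstab : I ≤ stab ψ) (hfst : ∀ x ∈ I, x.1 = 0) (k : Fin n)
    (hsupp : ∀ m, m ≠ k → ∀ x ∈ I, x.2 m = 0)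
    {x y : GV n} (hx : x ∈ I) (hy : y ∈ I) : gBracket x y = 0 := by
  obtain ⟨I₀, hI₀⟩ := exists_ne_zero_point hψ
  set u : Fin 2 → ℂ := fun a => ψ (Function.update I₀ k a) with hu_def
  have hu : u ≠ 0 := by
    intro hcon
    apply hI₀
    have := congrFun hcon (I₀ k)
    rw [hu_def] at this
    simpa [Function.update_eq_self] using this
  have happ : ∀ z ∈ I, applySingle k (z.2 k) ψ = 0 := by
    intro z hz
    have hd : dPhi ψ z = 0 := (mem_stab.1 (hIstab hz)).2
    funext J
    have := congrFun hd J
    rw [dPhi_apply, hfst z hz] at this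
    simp only [Complex.ofReal_zero, mul_zero, zero_mul, zero_add] at this
    rw [Finset.sum_eq_single k] at this
    · exact this.trans rfl |>.symm ▸ this
    · intro m _ hm
      rw [hsupp m hm z hz, applySingle_zero_matrix]
      rfl
    · intro hk
      exact absurd (Finset.mem_univ k) hk
  have hmv : ∀ z ∈ I, (z.2 k).mulVec u = 0 := by
    intro z hz
    funext a
    have := congrFun (happ z hz) (Function.update I₀ k a)
    simp only [applySingle, Function.update_self, Function.update_idem] at this
    rw [show (0 : QState n) (Function.update I₀ k a) = 0 from rfl] at this
    simpa [Matrix.mulVec, dotProduct, hu_def] using this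
  apply Prod.ext
  · rfl
  · funext m
    rw [gBracket_snd]
    by_cases hm : m = k
    · subst hm
      have hmem : ⁅x.2 m, y.2 m⁆ ∈ su2 :=
        su2_bracket_mem (mem_gSub.1 (mem_stab.1 (hIstab hx)).1 m)
          (mem_gSub.1 (mem_stab.1 (hIstab hy)).1 m)
      have hkill : (⁅x.2 m, y.2 m⁆ : Matrix (Fin 2) (Fin 2) ℂ).mulVec u = 0 := by
        rw [Ring.lie_def, Matrix.sub_mulVec, ← Matrix.mulVec_mulVec, ← Matrix.mulVec_mulVec,
          hmv x hx, hmv y hy]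
        simp [Matrix.mulVec_zero]
      exact su2_kill_eq_zero hmem hu hkill
    · rw [hsupp m hm x hx, Ring.lie_def, zero_mul, mul_zero, sub_self]
      rfl

/-- Existence of a minimal nonzero ideal. -/
lemma exists_minimal_ideal {S : Submodule ℝ (GV n)} (hbot : S ≠ ⊥)
    (hclosed : ∀ x ∈ S, ∀ y ∈ S, gBracket x y ∈ S) :
    ∃ I : Submodule ℝ (GV n), IsIdeal S I ∧ I ≠ ⊥ ∧
      ∀ J : Submodule ℝ (GV n), IsIdeal S J → J ≠ ⊥ → finrank ℝ I ≤ finrank ℝ J := by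
  classical
  set P : ℕ → Prop := fun d => ∃ I : Submodule ℝ (GV n), IsIdeal S I ∧ I ≠ ⊥ ∧ finrank ℝ I = d
    with hP
  have hPex : ∃ d, P d := ⟨finrank ℝ S, S, ⟨le_rfl, fun s hs x hx => hclosed s hs x hx⟩, hbot, rfl⟩
  obtain ⟨I, hI, hIne, hId⟩ := Nat.find_spec hPex
  refine ⟨I, hI, hIne, ?_⟩
  intro J hJ hJne
  rw [hId]
  exact Nat.find_min' hPex ⟨J, hJ, hJne, rfl⟩


/-- The conclusion of the semisimple-part bound. -/
def CoreConcl (S : Submodule ℝ (GV n)) : Prop :=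
  2 * finrank ℝ S ≤ 3 * (TS S).card ∧
    ∀ k : Fin n, Submodule.map (Pj k) S ≠ ⊥ →
      ∃ a ∈ Submodule.map (Pj k) S, ∃ b ∈ Submodule.map (Pj k) S,
        a ≠ 0 ∧ ∀ r : ℝ, b ≠ r • a

lemma core_bot : CoreConcl (⊥ : Submodule ℝ (GV n)) := by
  constructor
  · simp
  · intro k hk
    exact absurd (Submodule.map_bot (Pj k)) hk

/-- Main induction: a center-free bracket-closed subalgebra of the stabilizer has
dimension at most `3/2` times the number of active qubits, and at every active qubit
its image contains two independent directions. -/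
lemma core (ψ : QState n) (hψ : ψ ≠ 0) :
    ∀ N : ℕ, ∀ S : Submodule ℝ (GV n), finrank ℝ S ≤ N →
    S ≤ stab ψ →
    (∀ x ∈ S, ∀ y ∈ S, gBracket x y ∈ S) →
    (∀ x ∈ S, (∀ y ∈ S, gBracket x y = 0) → x = 0) →
    CoreConcl S := by
  intro N
  induction N with
  | zero =>
    intro S hrank _ _ _
    have hbot : S = ⊥ := Submodule.finrank_eq_zero.1 (Nat.le_zero.1 hrank)
    rw [hbot]
    exact core_bot
  | succ N IH =>
    intro S hrank hstab hclosed hcf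
    by_cases hbot : S = ⊥
    · rw [hbot]; exact core_bot
    -- memberships in su2
    have hgs : ∀ x ∈ S, ∀ k, x.2 k ∈ su2 :=
      fun x hx k => mem_gSub.1 (mem_stab.1 (hstab hx)).1 k
    -- minimal nonzero ideal
    obtain ⟨I, hI, hIne, hmin⟩ := exists_minimal_ideal hbot hclosed
    have hIS : I ≤ S := hI.1
    have hIstab : I ≤ stab ψ := le_trans hIS hstab
    -- the orthogonal complement
    obtain ⟨hdim, hspan⟩ := split S I hIS
    set I' : Submodule ℝ (GV n) := S ⊓ orth I with hI'def
    have hI'S : I' ≤ S := inf_le_left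
    have hI'ideal : IsIdeal S I' := by
      refine ⟨hI'S, ?_⟩
      intro s hs x hx
      refine ⟨hclosed s hs x hx.1, ?_⟩
      intro v hv
      have hinv := bform_invariant (x := s) (y := x) (z := v)
        (fun k => hgs s hs k) (fun k => hgs x (hI'S hx) k)
      have hxv : bform x (gBracket s v) = 0 := hx.2 _ (hI.2 s hs v hv)
      linarith [hinv, hxv]
    have hdisj : I ⊓ I' = ⊥ := by
      rw [eq_bot_iff]
      intro x hx
      have : bform x x = 0 := hx.2.2 x hx.1
      simpa using bform_self_eq_zero this
    have hII' : ∀ a ∈ I, ∀ b ∈ I', gBracket a b = 0 := by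
      intro a ha b hb
      have h1 : gBracket a b ∈ I := by
        rw [show gBracket a b = - gBracket b a from by rw [gBracket_antisymm]]
        exact Submodule.neg_mem _ (hI.2 b (hI'S hb) a ha)
      have h2 : gBracket a b ∈ I' := hI'ideal.2 a (hIS ha) b hb
      have : gBracket a b ∈ I ⊓ I' := ⟨h1, h2⟩
      rwa [hdisj, Submodule.mem_bot] at this
    -- the minimal ideal is its own derived algebra
    have hBrI : brSpan I I = I := by
      by_cases habel : brSpan I I = ⊥
      · exfalso
        obtain ⟨x0, hx0, hx0ne⟩ := (Submodule.ne_bot_iff I).1 hIne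
        apply hx0ne
        apply hcf x0 (hIS hx0)
        intro y hy
        rw [hspan] at hy
        obtain ⟨a, ha, b, hb, rfl⟩ := Submodule.mem_sup.1 hy
        rw [gBracket_add_right]
        have h1 : gBracket x0 a = 0 := by
          have := bracket_mem_brSpan (A := I) (B := I) hx0 ha
          rwa [habel, Submodule.mem_bot] at this
        rw [h1, hII' x0 hx0 b hb, add_zero]
      · have hle : brSpan I I ≤ I :=
          brSpan_le fun a ha b hb => hI.2 a (hIS ha) b hb
        exact Submodule.eq_of_le_of_finrank_le hle
          (hmin (brSpan I I) (brSpan_isIdeal hI) habel)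
    have hfstI : ∀ x ∈ I, x.1 = 0 := by
      intro x hx
      exact brSpan_fst_eq_zero (by rw [hBrI]; exact hx)
    -- a noncommuting pair in I
    obtain ⟨x, hx, y, hy, hxy⟩ : ∃ x ∈ I, ∃ y ∈ I, gBracket x y ≠ 0 := by
      by_contra hcon
      push_neg at hcon
      exact hIne (by rw [← hBrI]; exact brSpan_eq_bot hcon)
    -- injectivity of active projections on I
    have hinj : ∀ k : Fin n, Submodule.map (Pj k) I ≠ ⊥ → ∀ z ∈ I, z.2 k = 0 → z = 0 := by
      intro k hk z hz hzk
      set Jk : Submodule ℝ (GV n) := I ⊓ LinearMap.ker (Pj k) with hJk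
      have hJkideal : IsIdeal S Jk := by
        refine ⟨le_trans inf_le_left hIS, ?_⟩
        intro s hs w hw
        obtain ⟨hw1, hw2⟩ := Submodule.mem_inf.1 hw
        refine Submodule.mem_inf.2 ⟨hI.2 s hs w hw1, ?_⟩
        rw [LinearMap.mem_ker, Pj_apply, gBracket_snd,
          show w.2 k = 0 from LinearMap.mem_ker.1 hw2, Ring.lie_def, zero_mul, mul_zero, sub_self]
      have hJkbot : Jk = ⊥ := by
        by_contra hJkne
        have h1 : finrank ℝ I ≤ finrank ℝ Jk := hmin Jk hJkideal hJkne
        have h2 : Jk = I := Submodule.eq_of_le_of_finrank_le inf_le_left h1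
        apply hk
        apply map_Pj_eq_bot
        intro w hw
        exact LinearMap.mem_ker.1 (h2 ▸ hw : w ∈ Jk).2
      have : z ∈ Jk := Submodule.mem_inf.2 ⟨hz, LinearMap.mem_ker.2 hzk⟩
      rwa [hJkbot, Submodule.mem_bot] at this
    -- fatness at qubits active for I
    have hfat : ∀ k ∈ TS I, ∃ a ∈ Submodule.map (Pj k) I, ∃ b ∈ Submodule.map (Pj k) I,
        a ≠ 0 ∧ ∀ r : ℝ, b ≠ r • a := by
      intro k hk
      have hk' := mem_TS.1 hk
      refine ⟨x.2 k, ⟨x, hx, rfl⟩, y.2 k, ⟨y, hy, rfl⟩, ?_, ?_⟩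
      · intro ha0
        exact hxy (by rw [hinj k hk' x hx ha0, gBracket_zero_left])
      · intro r hr
        have : (y - r • x).2 k = 0 := by
          simp only [Prod.snd_sub, Prod.smul_snd, Pi.sub_apply, Pi.smul_apply, hr, sub_self]
        have hyx : y - r • x = 0 :=
          hinj k hk' _ (Submodule.sub_mem I hy (Submodule.smul_mem I r hx)) this
        have : y = r • x := by
          rw [sub_eq_zero] at hyx
          exact hyx
        exact hxy (by rw [this, gBracket_smul_right, gBracket_self, smul_zero])
    -- at least two active qubits for I
    obtain ⟨k₀, hk₀⟩ : ∃ k₀, k₀ ∈ TS I := by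
      by_contra hcon
      push_neg at hcon
      apply hIne
      rw [eq_bot_iff]
      intro z hz
      have h2 : ∀ k, z.2 k = 0 := by
        intro k
        have := hcon k
        rw [mem_TS, not_not] at this
        have : Pj k z ∈ Submodule.map (Pj k) I := ⟨z, hz, rfl⟩
        rw [‹Submodule.map (Pj k) I = ⊥›] at this
        exact Submodule.mem_bot ℝ |>.1 this
      have h1 : z.1 = 0 := hfstI z hz
      have : z = 0 := Prod.ext h1 (funext h2)
      rw [this]; exact Submodule.zero_mem ⊥
    have hcard2 : 2 ≤ (TS I).card := by
      by_contra hcon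
      push_neg at hcon
      have hsingle : ∀ m, m ≠ k₀ → ∀ z ∈ I, z.2 m = 0 := by
        intro m hm z hz
        have hmnot : m ∉ TS I := by
          intro hmem
          exact hm (Finset.card_le_one.1 (Nat.lt_succ_iff.1 hcon) m hmem k₀ hk₀)
        rw [mem_TS, not_not] at hmnot
        have : Pj m z ∈ Submodule.map (Pj m) I := ⟨z, hz, rfl⟩
        rw [hmnot] at this
        exact Submodule.mem_bot ℝ |>.1 this
      exact hxy (singleton_support_bracket hψ hIstab hfstI k₀ hsingle hx hy)
    -- dimension of I is at most 3
    have hrankI : finrank ℝ I ≤ 3 := by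
      set f := (Pj k₀).domRestrict I with hf
      have hkerf : LinearMap.ker f = ⊥ := by
        rw [eq_bot_iff]
        intro z hz
        have hz2 : (z : GV n).2 k₀ = 0 := LinearMap.mem_ker.1 hz
        have := hinj k₀ (mem_TS.1 hk₀) z z.2 hz2
        simp [Submodule.mem_bot, this]
        exact Subtype.ext this
      have hrn := LinearMap.finrank_range_add_finrank_ker f
      rw [hkerf, finrank_bot, add_zero] at hrn
      rw [← hrn, LinearMap.range_domRestrict]
      calc finrank ℝ (Submodule.map (Pj k₀) I) ≤ finrank ℝ su2 :=
            Submodule.finrank_mono (map_Pj_le_su2 (fun z hz k => hgs z (hIS hz) k) k₀)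
        _ ≤ 3 := su2_finrank_le
    -- I' is inactive on the active qubits of I
    have hI'inactive : ∀ k ∈ TS I, Submodule.map (Pj k) I' = ⊥ := by
      intro k hk
      obtain ⟨a, ⟨xa, hxa, hxae⟩, b, ⟨xb, hxb, hxbe⟩, ha0, hab⟩ := hfat k hk
      apply map_Pj_eq_bot
      intro z hz
      have hca : ⁅z.2 k, a⁆ = 0 := by
        have := hII' xa hxa z hz
        have hcomp : ⁅xa.2 k, z.2 k⁆ = 0 := by
          have := congrFun (congrArg Prod.snd this) k
          rwa [gBracket_snd] at this
        rw [← hxae, Pj_apply, Ring.lie_def]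
        rw [Ring.lie_def] at hcomp
        rw [← neg_sub, hcomp, neg_zero]
      have hcb : ⁅z.2 k, b⁆ = 0 := by
        have := hII' xb hxb z hz
        have hcomp : ⁅xb.2 k, z.2 k⁆ = 0 := by
          have := congrFun (congrArg Prod.snd this) k
          rwa [gBracket_snd] at this
        rw [← hxbe, Pj_apply, Ring.lie_def]
        rw [Ring.lie_def] at hcomp
        rw [← neg_sub, hcomp, neg_zero]
      exact commute_indep_eq_zero (hxae ▸ hgs xa (hIS hxa) k) (hxbe ▸ hgs xb (hIS hxb) k)
        (hgs z (hI'S hz) k) hca hcb ha0 hab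
    -- splitting of the active sets
    have hmapsup : ∀ k, Submodule.map (Pj k) S
        = Submodule.map (Pj k) I ⊔ Submodule.map (Pj k) I' := by
      intro k
      rw [hspan, Submodule.map_sup]
    have hTSsub : TS I ⊆ TS S := by
      intro k hk
      rw [mem_TS] at hk ⊢
      rw [hmapsup k]
      intro hsup
      exact hk (sup_eq_bot_iff.1 hsup).1
    have hTS'sub : TS I' ⊆ TS S := by
      intro k hk
      rw [mem_TS] at hk ⊢
      rw [hmapsup k]
      intro hsup
      exact hk (sup_eq_bot_iff.1 hsup).2
    have hTSeq : TS S = TS I ∪ TS I' := by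
      apply Finset.Subset.antisymm
      · intro k hk
        rw [mem_TS, hmapsup k] at hk
        rw [Finset.mem_union, mem_TS, mem_TS]
        by_contra hcon
        push_neg at hcon
        exact hk (by rw [hcon.1, hcon.2, sup_bot_eq])
      · intro k hk
        rcases Finset.mem_union.1 hk with h | h
        · exact hTSsub h
        · exact hTS'sub h
    have hTSdisj : Disjoint (TS I) (TS I') := by
      rw [Finset.disjoint_left]
      intro k hk hk'
      exact (mem_TS.1 hk') (hI'inactive k hk)
    have hTScard : (TS S).card = (TS I).card + (TS I').card := by
      rw [hTSeq, Finset.card_union_of_disjoint hTSdisj]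
    -- apply induction hypothesis to I'
    have hIpos : 1 ≤ finrank ℝ I := by
      rcases Nat.eq_zero_or_pos (finrank ℝ I) with h | h
      · exact absurd (Submodule.finrank_eq_zero.1 h) hIne
      · exact h
    have hI'rank : finrank ℝ I' ≤ N := by omega
    have hI'closed : ∀ a ∈ I', ∀ b ∈ I', gBracket a b ∈ I' :=
      fun a ha b hb => hI'ideal.2 a (hI'S ha) b hb
    have hI'cf : ∀ a ∈ I', (∀ b ∈ I', gBracket a b = 0) → a = 0 := by
      intro a ha hab
      apply hcf a (hI'S ha)
      intro z hz
      rw [hspan] at hz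
      obtain ⟨u, hu, v, hv, rfl⟩ := Submodule.mem_sup.1 hz
      rw [gBracket_add_right]
      have h1 : gBracket a u = 0 := by
        rw [show gBracket a u = - gBracket u a from by rw [gBracket_antisymm]]
        rw [hII' u hu a ha, neg_zero]
      rw [h1, hab v hv, add_zero]
    obtain ⟨ihbound, ihfat⟩ :=
      IH I' hI'rank (le_trans hI'S hstab) hI'closed hI'cf
    constructor
    · -- dimension bound
      have := hTScard
      have h2 : 2 ≤ (TS I).card := hcard2
      omega
    · -- fatness
      intro k hk
      have hkTS : k ∈ TS S := mem_TS.2 hk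
      rw [hTSeq, Finset.mem_union] at hkTS
      rcases hkTS with h | h
      · obtain ⟨a, ha, b, hb, h0, hind⟩ := hfat k h
        exact ⟨a, Submodule.map_mono hIS ha, b, Submodule.map_mono hIS hb, h0, hind⟩
      · obtain ⟨a, ha, b, hb, h0, hind⟩ := ihfat k (mem_TS.1 h)
        exact ⟨a, Submodule.map_mono hI'S ha, b, Submodule.map_mono hI'S hb, h0, hind⟩


/-- The center of `K`. -/
def centerOf (K : Submodule ℝ (GV n)) : Submodule ℝ (GV n) where
  carrier := {x | x ∈ K ∧ ∀ y ∈ K, gBracket x y = 0}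
  add_mem' := by
    rintro a b ⟨haK, ha⟩ ⟨hbK, hb⟩
    exact ⟨Submodule.add_mem K haK hbK,
      fun y hy => by rw [gBracket_add_left, ha y hy, hb y hy, add_zero]⟩
  zero_mem' := ⟨Submodule.zero_mem K, fun y _ => gBracket_zero_left y⟩
  smul_mem' := by
    rintro r a ⟨haK, ha⟩
    exact ⟨Submodule.smul_mem K r haK,
      fun y hy => by rw [gBracket_smul_left, ha y hy, smul_zero]⟩

lemma mem_centerOf {K : Submodule ℝ (GV n)} {x : GV n} :
    x ∈ centerOf K ↔ x ∈ K ∧ ∀ y ∈ K, gBracket x y = 0 := Iff.rfl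

theorem main_bound (ψ : QState n) (hψ : ψ ≠ 0) :
    2 * finrank ℝ (stab ψ) ≤ 3 * n := by
  classical
  set K := stab ψ with hK
  have hKclosed : ∀ x ∈ K, ∀ y ∈ K, gBracket x y ∈ K :=
    fun x hx y hy => stab_bracket_mem hx hy
  have hKgs : ∀ x ∈ K, ∀ k, x.2 k ∈ su2 :=
    fun x hx k => mem_gSub.1 (mem_stab.1 hx).1 k
  set Z := centerOf K with hZ
  have hZK : Z ≤ K := fun x hx => hx.1
  obtain ⟨hdim, hspan⟩ := split K Z hZK
  set Sm : Submodule ℝ (GV n) := K ⊓ orth Z with hSm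
  have hSmK : Sm ≤ K := inf_le_left
  have hSmclosed : ∀ x ∈ Sm, ∀ y ∈ Sm, gBracket x y ∈ Sm := by
    intro x hx y hy
    refine Submodule.mem_inf.2 ⟨hKclosed x (hSmK hx) y (hSmK hy), ?_⟩
    intro v hv
    have hinv := bform_invariant (x := x) (y := y) (z := v)
      (fun k => hKgs x (hSmK hx) k) (fun k => hKgs y (hSmK hy) k)
    have hxv : gBracket x v = 0 := by
      rw [show gBracket x v = - gBracket v x from by rw [gBracket_antisymm],
        hv.2 x (hSmK hx), neg_zero]
    rw [hxv, map_zero] at hinv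
    linarith [hinv]
  have hSmcf : ∀ x ∈ Sm, (∀ y ∈ Sm, gBracket x y = 0) → x = 0 := by
    intro x hx hxc
    have hxZ : x ∈ Z := by
      refine mem_centerOf.2 ⟨hSmK hx, ?_⟩
      intro y hy
      rw [hspan] at hy
      obtain ⟨a, ha, b, hb, rfl⟩ := Submodule.mem_sup.1 hy
      rw [gBracket_add_right]
      have h1 : gBracket x a = 0 := by
        rw [show gBracket x a = - gBracket a x from by rw [gBracket_antisymm],
          ha.2 x (hSmK hx), neg_zero]
      rw [h1, hxc b hb, add_zero]
    have : bform x x = 0 := (Submodule.mem_inf.1 hx).2 x hxZ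
    exact bform_self_eq_zero this
  obtain ⟨hbound, hfat⟩ := core ψ hψ (finrank ℝ Sm) Sm le_rfl hSmK hSmclosed hSmcf
  -- the center is invisible on active qubits
  have hZmap3 : ∀ k ∈ TS Sm, Submodule.map (Pj k) Z = ⊥ := by
    intro k hk
    obtain ⟨a, ⟨xa, hxa, hxae⟩, b, ⟨xb, hxb, hxbe⟩, ha0, hab⟩ := hfat k (mem_TS.1 hk)
    apply map_Pj_eq_bot
    intro z hz
    have hca : ⁅z.2 k, a⁆ = 0 := by
      have := hz.2 xa (hSmK hxa)
      have hc := congrFun (congrArg Prod.snd this) k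
      rw [gBracket_snd] at hc
      rw [← hxae, Pj_apply]
      exact hc
    have hcb : ⁅z.2 k, b⁆ = 0 := by
      have := hz.2 xb (hSmK hxb)
      have hc := congrFun (congrArg Prod.snd this) k
      rw [gBracket_snd] at hc
      rw [← hxbe, Pj_apply]
      exact hc
    exact commute_indep_eq_zero (hxae ▸ hKgs xa (hSmK hxa) k) (hxbe ▸ hKgs xb (hSmK hxb) k)
      (hKgs z (hZK hz) k) hca hcb ha0 hab
  have hZmap1 : ∀ k : Fin n, finrank ℝ (Submodule.map (Pj k) Z) ≤ 1 := by
    intro k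
    apply pairwise_commute_finrank_le_one _ (map_Pj_le_su2 (fun z hz k' => hKgs z (hZK hz) k') k)
    rintro c ⟨z, hz, rfl⟩ c' ⟨z', hz', rfl⟩
    have := hz.2 z' (hZK hz')
    have hc := congrFun (congrArg Prod.snd this) k
    rw [gBracket_snd] at hc
    exact hc
  -- injection of the center into the product of its images
  have hZrank : finrank ℝ Z ≤ ∑ k : Fin n, finrank ℝ (Submodule.map (Pj k) Z) := by
    set g : ↥Z →ₗ[ℝ] (∀ k : Fin n, ↥(Submodule.map (Pj k) Z)) :=
      { toFun := fun z => fun k => ⟨(z : GV n).2 k, ⟨(z : GV n), z.2, rfl⟩⟩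
        map_add' := by intro a b; funext k; apply Subtype.ext; rfl
        map_smul' := by intro r a; funext k; apply Subtype.ext; rfl } with hg
    have hginj : Function.Injective g := by
      intro z w hzw
      apply Subtype.ext
      have hsnd : (z : GV n).2 = (w : GV n).2 := by
        funext k
        have := congrFun hzw k
        exact congrArg Subtype.val this
      have hzw2 : ((z : GV n) - (w : GV n)).2 = 0 := by
        rw [Prod.snd_sub, hsnd, sub_self]
      have hfst : ((z : GV n) - (w : GV n)).1 = 0 := by
        apply stab_fst_eq_zero hψ
        · exact Submodule.sub_mem K (hZK z.2) (hZK w.2)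
        · intro j
          rw [hzw2]
          rfl
      have : (z : GV n) - (w : GV n) = 0 := Prod.ext hfst hzw2
      exact sub_eq_zero.1 this
    calc finrank ℝ Z ≤ finrank ℝ (∀ k : Fin n, ↥(Submodule.map (Pj k) Z)) :=
          LinearMap.finrank_le_finrank_of_injective hginj
      _ = ∑ k : Fin n, finrank ℝ (Submodule.map (Pj k) Z) := finrank_pi_fintype ℝ
  have hZbound : finrank ℝ Z ≤ n - (TS Sm).card := by
    have hsum : ∑ k : Fin n, finrank ℝ (Submodule.map (Pj k) Z)
        = ∑ k ∈ Finset.univ \ TS Sm, finrank ℝ (Submodule.map (Pj k) Z) := by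
      symm
      apply Finset.sum_subset (Finset.sdiff_subset)
      intro k _ hknot
      have hkTS : k ∈ TS Sm := by
        by_contra hcon
        exact hknot (Finset.mem_sdiff.2 ⟨Finset.mem_univ k, hcon⟩)
      rw [hZmap3 k hkTS]
      simp
    have hle : ∑ k ∈ Finset.univ \ TS Sm, finrank ℝ (Submodule.map (Pj k) Z)
        ≤ (Finset.univ \ TS Sm).card := by
      calc _ ≤ ∑ _k ∈ Finset.univ \ TS Sm, 1 :=
            Finset.sum_le_sum fun k _ => hZmap1 k
        _ = (Finset.univ \ TS Sm).card := by simp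
    have hcardeq : (Finset.univ \ TS Sm).card = n - (TS Sm).card := by
      rw [Finset.card_sdiff_of_subset (Finset.subset_univ _)]
      simp
    omega
  have hTn : (TS Sm).card ≤ n := by
    calc (TS Sm).card ≤ Finset.univ.card := Finset.card_le_univ _
      _ = n := by simp
  omega

end S12

/-- Maximum stabilizer dimension: for every nonzero `n`-qubit state `ψ`,
`2 · dim K_ψ ≤ 3n`, i.e. `dim K_ψ ≤ 3n/2`. -/
theorem stmt12 {n : ℕ} (hn : 1 ≤ n) (ψ : QState n) (hψ : ψ ≠ 0) :
    2 * Module.finrank ℝ ↥(stab ψ) ≤ 3 * n :=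
  S12.main_bound ψ hψ
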